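/- Let u > 0 and ε ∈ (0, u). Let ζ : [0,∞) → ℝ be right-continuous with left limits with ζ(0) ≥ 0, let η be RCLL, nondecreasing with η(0) ≥ 0, and let β be RCLL with −ε² ≤ ∫₀ᵗ β(s) ds ≤ ε² for all t ∈ [0,u]. Suppose α := ζ + η + β satisfies α(t) ≥ 0 for all t ∈ [0,u]. Then for all t ∈ [0,u], α(t) ≥ Γ[ζ](t) + β(t) − w̄_u(ζ, ε) − 3ε, where Γ[ζ](t) = ζ(t) + sup_{s ≤ t} (ζ(s))⁻ is the one-dimensional Skorohod map and w̄_u(ζ, ε) = sup{|ζ(s) − ζ(t)| : s,t ∈ [0,u], |s−t| ≤ ε} is the modulus of continuity. -/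

import Mathlib

/-- One-dimensional Skorohod map: `Γ[ζ](t) = ζ(t) + sup_{0 ≤ s ≤ t} (ζ(s))⁻`. -/
noncomputable def skorohod (ζ : ℝ → ℝ) (t : ℝ) : ℝ :=
  ζ t + sSup ((fun s => max (-(ζ s)) 0) '' Set.Icc 0 t)

/-- Modulus of continuity of `ζ` over `[0,u]` at scale `δ`. -/
noncomputable def modCont (ζ : ℝ → ℝ) (u δ : ℝ) : ℝ :=
  sSup {y | ∃ s t, s ∈ Set.Icc 0 u ∧ t ∈ Set.Icc 0 u ∧ |s - t| ≤ δ ∧ y = |ζ s - ζ t|}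

/-- Right continuous with left limits. -/
def RCLL (f : ℝ → ℝ) : Prop :=
  (∀ t : ℝ, ContinuousWithinAt f (Set.Ici t) t) ∧
  (∀ t : ℝ, ∃ l : ℝ, Filter.Tendsto f (nhdsWithin t (Set.Iio t)) (nhds l))

lemma rcll_bdd {f : ℝ → ℝ} (hf : RCLL f) (a b : ℝ) :
    ∃ M : ℝ, ∀ x ∈ Set.Icc a b, |f x| ≤ M := by
  refine isCompact_Icc.induction_on (p := fun s => ∃ M, ∀ x ∈ s, |f x| ≤ M)
    ⟨0, by simp⟩ ?_ ?_ ?_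
  · rintro s t hst ⟨M, hM⟩
    exact ⟨M, fun x hx => hM x (hst hx)⟩
  · rintro s t ⟨M, hM⟩ ⟨N, hN⟩
    exact ⟨max M N, fun x hx => hx.elim
      (fun h => (hM x h).trans (le_max_left _ _))
      (fun h => (hN x h).trans (le_max_right _ _))⟩
  · intro x hx
    obtain ⟨l, hl⟩ := hf.2 x
    set M := max (|f x|) (|l|) + 1 with hM
    have hfx : |f x| < M := by
      have := le_max_left (|f x|) (|l|); linarith
    have hlx : |l| < M := by
      have := le_max_right (|f x|) (|l|); linarith
    have h1 : ∀ᶠ y in nhdsWithin x (Set.Ici x), |f y| ≤ M := by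
      filter_upwards [((hf.1 x).abs).eventually_lt_const hfx] with y hy using hy.le
    have h2 : ∀ᶠ y in nhdsWithin x (Set.Iio x), |f y| ≤ M := by
      filter_upwards [(hl.abs).eventually_lt_const hlx] with y hy using hy.le
    have h3 : ∀ᶠ y in nhds x, |f y| ≤ M := by
      rw [← nhdsWithin_univ, ← Set.Iio_union_Ici (a := x), nhdsWithin_union]
      exact Filter.eventually_sup.mpr ⟨h2, h1⟩
    exact ⟨{y | |f y| ≤ M}, mem_nhdsWithin_of_mem_nhds h3, M, fun y hy => hy⟩

theorem stmt0 (u ε : ℝ) (hu : 0 < u) (hε : 0 < ε) (hεu : ε < u)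
    (ζ η β : ℝ → ℝ) (hζ : RCLL ζ) (hζ0 : 0 ≤ ζ 0)
    (hη : RCLL η) (hηmono : MonotoneOn η (Set.Icc 0 u)) (hη0 : 0 ≤ η 0)
    (hβ : RCLL β) (hβint : IntervalIntegrable β MeasureTheory.volume 0 u)
    (hβbd : ∀ t ∈ Set.Icc (0:ℝ) u,
      (-(ε ^ 2) ≤ ∫ s in (0:ℝ)..t, β s) ∧ (∫ s in (0:ℝ)..t, β s) ≤ ε ^ 2)
    (hα : ∀ t ∈ Set.Icc (0:ℝ) u, 0 ≤ ζ t + η t + β t) :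
    ∀ t ∈ Set.Icc (0:ℝ) u,
      ζ t + η t + β t ≥ skorohod ζ t + β t - modCont ζ u ε - 3 * ε := by
  intro t ht
  obtain ⟨ht0, htu⟩ := ht
  obtain ⟨M, hMb⟩ := rcll_bdd hζ 0 u
  set W := modCont ζ u ε with hWdef
  have hWbdd : BddAbove {y | ∃ s t, s ∈ Set.Icc 0 u ∧ t ∈ Set.Icc 0 u ∧
      |s - t| ≤ ε ∧ y = |ζ s - ζ t|} := by
    refine ⟨M + M, ?_⟩
    rintro y ⟨s, t', hs, ht', -, rfl⟩
    calc |ζ s - ζ t'| ≤ |ζ s| + |ζ t'| := abs_sub _ _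
      _ ≤ M + M := add_le_add (hMb s hs) (hMb t' ht')
  have hw : ∀ s s', s ∈ Set.Icc 0 u → s' ∈ Set.Icc 0 u → |s - s'| ≤ ε →
      |ζ s - ζ s'| ≤ W := fun s s' hs hs' hss' =>
    le_csSup hWbdd ⟨s, s', hs, hs', hss', rfl⟩
  have hW0 : 0 ≤ W := by
    have h0 : (0:ℝ) ∈ Set.Icc 0 u := ⟨le_refl 0, hu.le⟩
    have := hw 0 0 h0 h0 (by simp [hε.le])
    simpa using (abs_nonneg (ζ 0 - ζ 0)).trans this
  have hη0t : 0 ≤ η t := hη0.trans (hηmono ⟨le_refl 0, hu.le⟩ ⟨ht0, htu⟩ ht0)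
  have key : sSup ((fun s => max (-(ζ s)) 0) '' Set.Icc 0 t) ≤ η t + W + 3 * ε := by
    apply Real.sSup_le
    · rintro y ⟨s, ⟨hs0, hst⟩, rfl⟩
      have hsu : s ≤ u := hst.trans htu
      refine max_le ?_ (by linarith)
      show -ζ s ≤ η t + W + 3 * ε
      by_cases hcase : s < ε
      · have h := hw 0 s ⟨le_refl 0, hu.le⟩ ⟨hs0, hsu⟩
          (by rw [zero_sub, abs_neg, abs_of_nonneg hs0]; linarith)
        have := abs_le.mp h
        linarith [this.2]
      · push_neg at hcase
        set a := s - ε with hadef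
        have ha0 : 0 ≤ a := by linarith
        have hβi : IntervalIntegrable β MeasureTheory.volume a s := by
          apply hβint.mono_set
          rw [Set.uIcc_of_le (by linarith : a ≤ s), Set.uIcc_of_le hu.le]
          exact Set.Icc_subset_Icc ha0 hsu
        have hβi2 : IntervalIntegrable β MeasureTheory.volume 0 a := by
          apply hβint.mono_set
          rw [Set.uIcc_of_le ha0, Set.uIcc_of_le hu.le]
          exact Set.Icc_subset_Icc le_rfl (by linarith)
        have hpt : ∀ x ∈ Set.Icc a s, -β x ≤ ζ s + W + η s := by
          intro x hx
          have hxu : x ∈ Set.Icc 0 u := ⟨ha0.trans hx.1, hx.2.trans hsu⟩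
          have h1 := hα x hxu
          have h2 := hw x s hxu ⟨hs0, hsu⟩ (by
            rw [abs_le]; constructor <;> linarith [hx.1, hx.2, hadef])
          have h3 : η x ≤ η s := hηmono hxu ⟨hs0, hsu⟩ hx.2
          have := abs_le.mp h2
          linarith [this.1]
        have hint : ∫ x in a..s, (-β x) ≤ ∫ x in a..s, (ζ s + W + η s) :=
          intervalIntegral.integral_mono_on (by linarith) hβi.neg
            intervalIntegrable_const hpt
        have h4 : (∫ _ in a..s, (ζ s + W + η s)) = ε * (ζ s + W + η s) := by
          rw [intervalIntegral.integral_const, smul_eq_mul]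
          rw [hadef]; ring
        have h5 : (∫ x in a..s, (-β x)) = (∫ x in (0:ℝ)..a, β x) - ∫ x in (0:ℝ)..s, β x := by
          rw [intervalIntegral.integral_neg]
          have := intervalIntegral.integral_add_adjacent_intervals hβi2 hβi
          linarith
        have h6 := hβbd a ⟨ha0, by linarith⟩
        have h7 := hβbd s ⟨hs0, hsu⟩
        have h8 : -(2 * ε ^ 2) ≤ ε * (ζ s + W + η s) := by
          rw [← h4]
          calc -(2 * ε ^ 2) ≤ (∫ x in (0:ℝ)..a, β x) - ∫ x in (0:ℝ)..s, β x := by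
                linarith [h6.1, h7.2]
            _ = ∫ x in a..s, (-β x) := h5.symm
            _ ≤ _ := hint
        have h9 : -(2 * ε) ≤ ζ s + W + η s := by nlinarith
        have hηst : η s ≤ η t := hηmono ⟨hs0, hsu⟩ ⟨ht0, htu⟩ hst
        linarith
    · linarith
  unfold skorohod
  linarith
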